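/- The channel max relative entropy D_max(M||N) := log_2 min{t ≥ 0 : tN - M is completely positive} is monotone under superchannels: for any quantum channels M, N ∈ CPTP(A→B) and any superchannel Θ mapping channels A→B to channels A'→B', D_max(Θ[M] || Θ[N]) ≤ D_max(M||N). -/

import Mathlib

open scoped BigOperators ComplexOrder
open scoped Matrix

abbrev Mat (ι : Type) := Matrix ι ι ℂ
abbrev QMap (ι κ : Type) := Mat ι →ₗ[ℂ] Mat κ

noncomputable def choi {ι κ : Type} [Fintype ι] [DecidableEq ι] (N : QMap ι κ) :
    Matrix (ι × κ) (ι × κ) ℂ :=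
  Matrix.of fun p q => N (Matrix.single p.1 q.1 1) p.2 q.2

def IsCP {ι κ : Type} [Fintype ι] [DecidableEq ι] [Fintype κ] (N : QMap ι κ) : Prop :=
  (choi N).PosSemidef

def IsTP {ι κ : Type} [Fintype ι] [Fintype κ] (N : QMap ι κ) : Prop :=
  ∀ ρ : Mat ι, (N ρ).trace = ρ.trace

def IsCPTP {ι κ : Type} [Fintype ι] [DecidableEq ι] [Fintype κ] (N : QMap ι κ) : Prop :=
  IsCP N ∧ IsTP N

noncomputable def tensMap {ι1 κ1 ι2 κ2 : Type} [Fintype ι1] [DecidableEq ι1]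
    [Fintype ι2] [DecidableEq ι2]
    (M : QMap ι1 κ1) (N : QMap ι2 κ2) : QMap (ι1 × ι2) (κ1 × κ2) where
  toFun X := Matrix.of fun p q =>
    ∑ i : ι1, ∑ i' : ι1, ∑ j : ι2, ∑ j' : ι2,
      X (i, j) (i', j') *
        (M (Matrix.single i i' 1) p.1 q.1 * N (Matrix.single j j' 1) p.2 q.2)
  map_add' X Y := by
    ext p q
    simp [Matrix.add_apply, add_mul, Finset.sum_add_distrib]
  map_smul' c X := by
    ext p q
    simp [Matrix.smul_apply, Finset.mul_sum, smul_eq_mul, mul_assoc]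

noncomputable def reindexQ {ι κ : Type} {m k : ℕ} (e : ι ≃ Fin m) (f : κ ≃ Fin k)
    (N : QMap ι κ) : QMap (Fin m) (Fin k) where
  toFun X := (N (X.submatrix e e)).submatrix f.symm f.symm
  map_add' X Y := by
    simp [Matrix.submatrix_add, map_add]
  map_smul' c X := by
    simp [Matrix.submatrix_smul, map_smul]

noncomputable def tensChan {a1 b1 a2 b2 : ℕ}
    (M : QMap (Fin a1) (Fin b1)) (N : QMap (Fin a2) (Fin b2)) :
    QMap (Fin (a1 * a2)) (Fin (b1 * b2)) :=
  reindexQ finProdFinEquiv finProdFinEquiv (tensMap M N)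

noncomputable def superApply {a b a' b' r : ℕ}
    (E : QMap (Fin a') (Fin a × Fin r)) (F : QMap (Fin b × Fin r) (Fin b'))
    (N : QMap (Fin a) (Fin b)) : QMap (Fin a') (Fin b') :=
  F ∘ₗ tensMap N (LinearMap.id : QMap (Fin r) (Fin r)) ∘ₗ E

noncomputable def replacement {ι κ : Type} [Fintype ι] (σ : Mat κ) : QMap ι κ where
  toFun ω := ω.trace • σ
  map_add' x y := by simp [Matrix.trace_add, add_smul]
  map_smul' c x := by simp [Matrix.trace_smul, smul_smul]

def IsDensity {κ : Type} [Fintype κ] (σ : Mat κ) : Prop :=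
  σ.PosSemidef ∧ σ.trace = 1

-- Channel max relative entropy: log₂ min {t ≥ 0 : t·N - M is completely positive}.
open Classical in
noncomputable def DmaxChan {ι κ : Type} [Fintype ι] [DecidableEq ι] [Fintype κ]
    (M N : QMap ι κ) : EReal :=
  if ∃ t : ℝ, 0 ≤ t ∧ IsCP ((t : ℂ) • N - M)
  then ((Real.logb 2 (sInf {t : ℝ | 0 ≤ t ∧ IsCP ((t : ℂ) • N - M)}) : ℝ) : EReal)
  else ⊤

lemma apply_eq_sum {ι κ : Type} [Fintype ι] [DecidableEq ι] (N : QMap ι κ)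
    (X : Mat ι) (k k' : κ) :
    N X k k' = ∑ i : ι, ∑ i' : ι, X i i' * N (Matrix.single i i' 1) k k' := by
  conv_lhs => rw [Matrix.matrix_eq_sum_single X]
  rw [map_sum, Matrix.sum_apply]
  refine Finset.sum_congr rfl fun i _ => ?_
  rw [map_sum, Matrix.sum_apply]
  refine Finset.sum_congr rfl fun i' _ => ?_
  have h : Matrix.single i i' (X i i') = X i i' • Matrix.single i i' (1:ℂ) := by
    ext p q
    by_cases h1 : i = p <;> by_cases h2 : i' = q <;>
      simp [Matrix.single, Matrix.smul_apply, h1, h2]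
  rw [h, map_smul, Matrix.smul_apply, smul_eq_mul]

lemma cp_of_kraus {ι κ T : Type} [Fintype ι] [DecidableEq ι] [Fintype κ] [Fintype T]
    (N : QMap ι κ) (A : T → Matrix κ ι ℂ)
    (h : ∀ X, N X = ∑ m, A m * X * (A m)ᴴ) : IsCP N := by
  have hch : choi N =
      (Matrix.of fun (m : T) (p : ι × κ) => star (A m p.2 p.1))ᴴ *
      (Matrix.of fun (m : T) (p : ι × κ) => star (A m p.2 p.1)) := by
    ext p q
    simp only [choi, Matrix.of_apply, h, Matrix.sum_apply, Matrix.mul_apply,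
      Matrix.conjTranspose_apply, star_star]
    refine Finset.sum_congr rfl fun m _ => ?_
    simp only [Matrix.mul_apply, Matrix.single, Matrix.of_apply,
      Matrix.conjTranspose_apply, ite_mul, zero_mul, one_mul]
    simp [mul_ite, ite_and, Finset.sum_ite_eq, Finset.sum_ite_eq']
  rw [IsCP, hch]
  exact Matrix.posSemidef_conjTranspose_mul_self _

lemma kraus_of_cp {ι κ : Type} [Fintype ι] [DecidableEq ι] [Fintype κ] [DecidableEq κ]
    (N : QMap ι κ) (h : IsCP N) :
    ∃ A : ι × κ → Matrix κ ι ℂ, ∀ X, N X = ∑ m, A m * X * (A m)ᴴ := by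
  obtain ⟨B, hB⟩ : ∃ B : Matrix (ι × κ) (ι × κ) ℂ, choi N = Bᴴ * B := by
    open scoped MatrixOrder in
    exact ⟨CFC.sqrt (choi N), by
      rw [(Matrix.nonneg_iff_posSemidef.mp (CFC.sqrt_nonneg (choi N))).1.eq, CFC.sqrt_mul_sqrt_self (choi N)
        (Matrix.nonneg_iff_posSemidef.mpr h)]⟩
  refine ⟨fun m => Matrix.of fun k i => star (B m (i, k)), fun X => ?_⟩
  ext k k'
  rw [apply_eq_sum]
  simp only [Matrix.sum_apply, Matrix.mul_apply, Matrix.conjTranspose_apply, Matrix.of_apply,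
    star_star]
  have hc : ∀ (i i' : ι), N (Matrix.single i i' 1) k k' = choi N ((i,k)) ((i',k')) := by
    intro i i'; rfl
  simp only [hc, hB, Matrix.mul_apply, Matrix.conjTranspose_apply, Finset.sum_mul,
    Finset.mul_sum]
  rw [Finset.sum_comm]
  conv_rhs => rw [Finset.sum_comm]
  refine Finset.sum_congr rfl fun i' _ => ?_
  rw [Finset.sum_comm]
  refine Finset.sum_congr rfl fun m _ => Finset.sum_congr rfl fun i _ => ?_
  ring

lemma kraus_apply_std {ι κ : Type} [Fintype ι] [DecidableEq ι]
    (A : Matrix κ ι ℂ) (i i' : ι) (k k' : κ) :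
    (A * Matrix.single i i' (1:ℂ) * Aᴴ) k k' = A k i * star (A k' i') := by
  simp only [Matrix.mul_apply, Matrix.single, Matrix.of_apply,
    Matrix.conjTranspose_apply, ite_mul, zero_mul, one_mul]
  simp [mul_ite, ite_and, Finset.sum_ite_eq, Finset.sum_ite_eq']

lemma cp_comp {ι κ μ : Type} [Fintype ι] [DecidableEq ι] [Fintype κ] [DecidableEq κ]
    [Fintype μ] [DecidableEq μ] (P : QMap κ μ) (Q : QMap ι κ) (hP : IsCP P) (hQ : IsCP Q) :
    IsCP (P ∘ₗ Q) := by
  obtain ⟨A, hA⟩ := kraus_of_cp P hP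
  obtain ⟨C, hC⟩ := kraus_of_cp Q hQ
  refine cp_of_kraus _ (fun (m : (κ × μ) × (ι × κ)) => A m.1 * C m.2) (fun X => ?_)
  rw [LinearMap.comp_apply, hC, hA]
  conv_rhs => rw [Fintype.sum_prod_type]
  refine Finset.sum_congr rfl fun m _ => ?_
  rw [Matrix.mul_sum, Matrix.sum_mul]
  refine Finset.sum_congr rfl fun l _ => ?_
  simp only [Matrix.conjTranspose_mul]
  simp only [Matrix.mul_assoc]

lemma sum_perm4 {α β : Type} [Fintype α] [Fintype β] (f : α → α → α → β → ℂ) :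
    (∑ x : α, ∑ x1 : α, ∑ x2 : α, ∑ i : β, f x x1 x2 i)
      = ∑ x2 : α, ∑ i : β, ∑ x1 : α, ∑ x : α, f x x1 x2 i := by
  trans (∑ x : α, ∑ x2 : α, ∑ x1 : α, ∑ i : β, f x x1 x2 i)
  · exact Finset.sum_congr rfl fun x _ => Finset.sum_comm
  trans (∑ x2 : α, ∑ x : α, ∑ x1 : α, ∑ i : β, f x x1 x2 i)
  · exact Finset.sum_comm
  trans (∑ x2 : α, ∑ x : α, ∑ i : β, ∑ x1 : α, f x x1 x2 i)
  · exact Finset.sum_congr rfl fun x2 _ => Finset.sum_congr rfl fun x _ => Finset.sum_comm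
  trans (∑ x2 : α, ∑ i : β, ∑ x : α, ∑ x1 : α, f x x1 x2 i)
  · exact Finset.sum_congr rfl fun x2 _ => Finset.sum_comm
  exact Finset.sum_congr rfl fun x2 _ => Finset.sum_congr rfl fun i _ => Finset.sum_comm

lemma cp_tens_id {ι κ ι2 : Type} [Fintype ι] [DecidableEq ι] [Fintype κ] [DecidableEq κ]
    [Fintype ι2] [DecidableEq ι2] (P : QMap ι κ) (hP : IsCP P) :
    IsCP (tensMap P (LinearMap.id : QMap ι2 ι2)) := by
  obtain ⟨A, hA⟩ := kraus_of_cp P hP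
  refine cp_of_kraus _ (fun (m : ι × κ) => Matrix.of fun (p : κ × ι2) (q : ι × ι2) =>
    A m p.1 q.1 * (if p.2 = q.2 then 1 else 0)) (fun X => ?_)
  ext p q
  show (∑ i : ι, ∑ i' : ι, ∑ j : ι2, ∑ j' : ι2,
      X (i, j) (i', j') *
        (P (Matrix.single i i' 1) p.1 q.1 *
          (LinearMap.id (Matrix.single j j' 1) : Mat ι2) p.2 q.2)) = _
  simp only [LinearMap.id_apply, hA, Matrix.sum_apply, kraus_apply_std]
  simp only [Matrix.single, Matrix.of_apply, Matrix.mul_apply,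
    Matrix.conjTranspose_apply, Fintype.sum_prod_type, mul_ite, ite_mul, mul_one, mul_zero,
    zero_mul, one_mul, ite_and, star_mul', apply_ite (star : ℂ → ℂ), star_one, star_zero,
    Finset.sum_ite_eq, Finset.sum_ite_eq', Finset.sum_ite_irrel, Finset.sum_const_zero,
    Finset.mem_univ, if_true, Finset.mul_sum, Finset.sum_mul]
  rw [sum_perm4 (fun x x1 x2 i => X (x, p.2) (x1, q.2) * (A (x2, i) p.1 x * star (A (x2, i) q.1 x1)))]
  refine Finset.sum_congr rfl fun x2 _ => Finset.sum_congr rfl fun i _ =>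
    Finset.sum_congr rfl fun x1 _ => Finset.sum_congr rfl fun x _ => ?_
  ring

lemma std_trace {ι : Type} [Fintype ι] [DecidableEq ι] (i i' : ι) :
    (Matrix.single i i' (1:ℂ)).trace = if i = i' then 1 else 0 := by
  by_cases h : i = i'
  · subst h; simp
  · simp [Matrix.trace_single_eq_of_ne i i' (1:ℂ) h, h]

lemma tensMap_id_trace {ι κ ι2 : Type} [Fintype ι] [DecidableEq ι] [Fintype κ]
    [Fintype ι2] [DecidableEq ι2] (M : QMap ι κ) (h : IsTP M) (ρ : Mat (ι × ι2)) :
    (tensMap M (LinearMap.id : QMap ι2 ι2) ρ).trace = ρ.trace := by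
  have h1 : (tensMap M (LinearMap.id : QMap ι2 ι2) ρ).trace
      = ∑ p : κ × ι2, ∑ i : ι, ∑ i' : ι, ∑ j : ι2, ∑ j' : ι2,
          ρ (i, j) (i', j') *
            (M (Matrix.single i i' 1) p.1 p.1 *
              (Matrix.single j j' (1:ℂ)) p.2 p.2) := rfl
  rw [h1]
  simp only [Matrix.single, Matrix.of_apply, mul_ite, ite_and, mul_one, mul_zero,
    Finset.sum_ite_eq, Finset.sum_ite_eq', Finset.sum_ite_irrel, Finset.sum_const_zero,
    Finset.mem_univ, if_true, Fintype.sum_prod_type]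
  have hstd : ∀ x2 x3 : ι, (Matrix.of fun i' j' =>
      if x2 = i' then if x3 = j' then (1:ℂ) else 0 else 0) = Matrix.single x2 x3 1 := by
    intro x2 x3; ext i' j'; simp [Matrix.single, ite_and]
  simp only [hstd]
  rw [Finset.sum_comm]
  refine Eq.trans (Finset.sum_congr rfl fun x1 _ => Finset.sum_comm) ?_
  refine Eq.trans (Finset.sum_congr rfl fun x1 _ => Finset.sum_congr rfl fun x2 _ =>
    Finset.sum_comm) ?_
  have key : ∀ (x1 : ι2) (x2 x3 : ι),
      (∑ x : κ, ρ (x2, x1) (x3, x1) * M (Matrix.single x2 x3 1) x x)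
        = ρ (x2, x1) (x3, x1) * (if x2 = x3 then 1 else 0) := by
    intro x1 x2 x3
    rw [← Finset.mul_sum]
    congr 1
    have : (∑ x : κ, M (Matrix.single x2 x3 1) x x)
        = (M (Matrix.single x2 x3 1)).trace := rfl
    rw [this, h, std_trace]
  simp only [key, mul_ite, mul_one, mul_zero, Finset.sum_ite_eq, Finset.mem_univ, if_true]
  rw [Matrix.trace]
  simp only [Matrix.diag, Fintype.sum_prod_type]
  exact Finset.sum_comm

lemma superApply_tp {a b a' b' r : ℕ}
    {E : QMap (Fin a') (Fin a × Fin r)} {F : QMap (Fin b × Fin r) (Fin b')}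
    {N : QMap (Fin a) (Fin b)} (hE : IsTP E) (hF : IsTP F) (hN : IsTP N) :
    IsTP (superApply E F N) := by
  intro ρ
  simp only [superApply, LinearMap.comp_apply]
  rw [hF, tensMap_id_trace _ hN, hE]

lemma superApply_cp {a b a' b' r : ℕ}
    {E : QMap (Fin a') (Fin a × Fin r)} {F : QMap (Fin b × Fin r) (Fin b')}
    {N : QMap (Fin a) (Fin b)} (hE : IsCP E) (hF : IsCP F) (hN : IsCP N) :
    IsCP (superApply E F N) := by
  exact cp_comp F _ hF (cp_comp _ E (cp_tens_id _ hN) hE)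

lemma choi_smul_sub {ι κ : Type} [Fintype ι] [DecidableEq ι]
    (M N : QMap ι κ) (t : ℂ) :
    choi (t • N - M) = t • choi N - choi M := by
  ext p q
  simp [choi, Matrix.sub_apply, Matrix.smul_apply, LinearMap.sub_apply, LinearMap.smul_apply]

lemma choi_trace_tp {ι κ : Type} [Fintype ι] [DecidableEq ι] [Fintype κ]
    (N : QMap ι κ) (h : IsTP N) : (choi N).trace = (Fintype.card ι : ℂ) := by
  rw [Matrix.trace]
  simp only [Matrix.diag, choi, Matrix.of_apply, Fintype.sum_prod_type]
  have h2 : ∀ i : ι, (∑ k : κ, N (Matrix.single i i 1) k k)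
      = (N (Matrix.single i i (1:ℂ))).trace := fun i => rfl
  have h3 : ∀ ρ : Mat ι, (N ρ).trace = ρ.trace := h
  simp only [h2, h3, std_trace, if_true, Finset.sum_const, Finset.card_univ, nsmul_eq_mul,
    mul_one]

lemma posSemidef_trace_nonneg {n : Type} [Fintype n] [DecidableEq n]
    {A : Matrix n n ℂ} (h : A.PosSemidef) : 0 ≤ A.trace := by
  rw [Matrix.trace]
  refine Finset.sum_nonneg fun p _ => ?_
  have := h.dotProduct_mulVec_nonneg (Pi.single p 1)
  have heq : star (Pi.single p 1 : n → ℂ) ⬝ᵥ A.mulVec (Pi.single p 1) = A p p := by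
    simp [dotProduct, Matrix.mulVec, Pi.single_apply, apply_ite (star : ℂ → ℂ),
      ite_mul, mul_ite, Finset.sum_ite_eq, Finset.sum_ite_eq']
  rwa [heq] at this

lemma one_le_of_cp_sub {ι κ : Type} [Fintype ι] [DecidableEq ι] [Fintype κ] [DecidableEq κ]
    [Nonempty ι]
    {M N : QMap ι κ} (hM : IsTP M) (hN : IsTP N) {t : ℝ}
    (hCP : IsCP (((t : ℂ)) • N - M)) : 1 ≤ t := by
  have h1 := posSemidef_trace_nonneg hCP
  rw [choi_smul_sub, Matrix.trace_sub, Matrix.trace_smul, choi_trace_tp _ hN,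
    choi_trace_tp _ hM] at h1
  have hc : (1:ℝ) ≤ (Fintype.card ι : ℝ) := by
    have h4 : 1 ≤ Fintype.card ι := Fintype.card_pos
    exact_mod_cast h4
  set c := (Fintype.card ι : ℝ) with hcdef
  have h2 : (0 : ℝ) ≤ t * c - c := by
    rw [← Complex.zero_le_real]
    push_cast
    simpa [smul_eq_mul, hcdef] using h1
  nlinarith

set_option maxHeartbeats 1000000 in
lemma tensMap_smul_sub {ι κ ι2 : Type} [Fintype ι] [DecidableEq ι] [Fintype ι2]
    [DecidableEq ι2] (M N : QMap ι κ) (t : ℂ) :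
    tensMap (t • N - M) (LinearMap.id : QMap ι2 ι2)
      = t • tensMap N (LinearMap.id : QMap ι2 ι2)
        - tensMap M (LinearMap.id : QMap ι2 ι2) := by
  apply LinearMap.ext
  intro X
  ext p q
  have hgen : ∀ (P : QMap ι κ), (tensMap P (LinearMap.id : QMap ι2 ι2) X) p q
      = ∑ i : ι, ∑ i' : ι, ∑ j : ι2, ∑ j' : ι2,
          X (i, j) (i', j') * (P (Matrix.single i i' 1) p.1 q.1 *
            (LinearMap.id (Matrix.single j j' 1) : Mat ι2) p.2 q.2) := fun P => rfl
  show (tensMap (t • N - M) (LinearMap.id : QMap ι2 ι2) X) p q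
      = (t • tensMap N (LinearMap.id : QMap ι2 ι2)
          - tensMap M (LinearMap.id : QMap ι2 ι2)) X p q
  rw [LinearMap.sub_apply, LinearMap.smul_apply, Matrix.sub_apply, Matrix.smul_apply,
    hgen, hgen, hgen]
  simp only [LinearMap.sub_apply, LinearMap.smul_apply, Matrix.sub_apply, Matrix.smul_apply,
    smul_eq_mul, sub_mul, mul_sub, Finset.sum_sub_distrib, Finset.mul_sum]
  congr 1
  refine Finset.sum_congr rfl fun i _ => Finset.sum_congr rfl fun i' _ =>
    Finset.sum_congr rfl fun j _ => Finset.sum_congr rfl fun j' _ => ?_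
  ring

lemma superApply_smul_sub {a b a' b' r : ℕ}
    (E : QMap (Fin a') (Fin a × Fin r)) (F : QMap (Fin b × Fin r) (Fin b'))
    (M N : QMap (Fin a) (Fin b)) (t : ℂ) :
    superApply E F (t • N - M) = t • superApply E F N - superApply E F M := by
  apply LinearMap.ext
  intro X
  simp only [superApply, LinearMap.comp_apply, tensMap_smul_sub, LinearMap.sub_apply,
    LinearMap.smul_apply, map_sub, map_smul]

lemma isCP_of_isEmpty {ι κ : Type} [Fintype ι] [DecidableEq ι] [Fintype κ] [IsEmpty ι]
    (N : QMap ι κ) : IsCP N := by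
  constructor
  · show (choi N)ᴴ = choi N
    apply Matrix.ext
    rintro ⟨i, k⟩ q
    exact isEmptyElim i
  · intro x
    simp [Subsingleton.elim x 0]

/-- The channel max relative entropy is monotone under superchannels. -/
theorem stmt10
    (a b a' b' r : ℕ) (M N : QMap (Fin a) (Fin b))
    (E : QMap (Fin a') (Fin a × Fin r)) (F : QMap (Fin b × Fin r) (Fin b'))
    (hM : IsCPTP M) (hN : IsCPTP N) (hE : IsCPTP E) (hF : IsCPTP F) :
    DmaxChan (superApply E F M) (superApply E F N) ≤ DmaxChan M N := by
  classical
  have hsub : ∀ t : ℝ, IsCP ((t:ℂ) • N - M) →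
      IsCP ((t:ℂ) • superApply E F N - superApply E F M) := by
    intro t hcp
    have h := superApply_cp hE.1 hF.1 hcp
    rwa [superApply_smul_sub] at h
  by_cases hex : ∃ t : ℝ, 0 ≤ t ∧ IsCP ((t:ℂ) • N - M)
  · have hex' : ∃ t : ℝ, 0 ≤ t ∧
        IsCP ((t:ℂ) • superApply E F N - superApply E F M) := by
      obtain ⟨t, ht, h⟩ := hex
      exact ⟨t, ht, hsub t h⟩
    rw [DmaxChan, DmaxChan, if_pos hex, if_pos hex', EReal.coe_le_coe_iff]
    set S : Set ℝ := {t : ℝ | 0 ≤ t ∧ IsCP ((t:ℂ) • N - M)} with hSdef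
    set S' : Set ℝ := {t : ℝ | 0 ≤ t ∧
      IsCP ((t:ℂ) • superApply E F N - superApply E F M)} with hS'def
    have hSne : S.Nonempty := hex
    have hS'ne : S'.Nonempty := hex'
    have hSS : S ⊆ S' := fun t ht => ⟨ht.1, hsub t ht.2⟩
    have hbdd' : BddBelow S' := ⟨0, fun t ht => ht.1⟩
    have hle : sInf S' ≤ sInf S := csInf_le_csInf hbdd' hSne hSS
    by_cases ha' : a' = 0
    · subst ha'
      have h0' : (0:ℝ) ∈ S' := ⟨le_refl 0, isCP_of_isEmpty _⟩
      have hS'0 : sInf S' = 0 :=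
        le_antisymm (csInf_le hbdd' h0') (le_csInf hS'ne fun t ht => ht.1)
      rw [hS'0, Real.logb_zero]
      by_cases ha : a = 0
      · subst ha
        have h0 : (0:ℝ) ∈ S := ⟨le_refl 0, isCP_of_isEmpty _⟩
        have hS0 : sInf S = 0 :=
          le_antisymm (csInf_le ⟨0, fun t ht => ht.1⟩ h0) (le_csInf hSne fun t ht => ht.1)
        rw [hS0, Real.logb_zero]
      · haveI : Nonempty (Fin a) := ⟨⟨0, Nat.pos_of_ne_zero ha⟩⟩
        have h1 : (1:ℝ) ≤ sInf S :=
          le_csInf hSne fun t ht => one_le_of_cp_sub hM.2 hN.2 ht.2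
        exact Real.logb_nonneg one_lt_two h1
    · haveI : Nonempty (Fin a') := ⟨⟨0, Nat.pos_of_ne_zero ha'⟩⟩
      have hΘM : IsTP (superApply E F M) := superApply_tp hE.2 hF.2 hM.2
      have hΘN : IsTP (superApply E F N) := superApply_tp hE.2 hF.2 hN.2
      have h1 : (1:ℝ) ≤ sInf S' :=
        le_csInf hS'ne fun t ht => one_le_of_cp_sub hΘM hΘN ht.2
      exact Real.logb_le_logb_of_le one_lt_two (lt_of_lt_of_le one_pos h1) hle
  · have htop : DmaxChan M N = ⊤ := by rw [DmaxChan, if_neg hex]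
    rw [htop]
    exact le_top
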